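/- Let p > 2 and let u : ℝ → ℝ be a 2π-periodic, strictly positive, C² function. Then (1/(2π))∫₀^{2π} u(x)^{2−p} (L_p u(x))² dx ≥ λ₁ · ‖u'‖_p^{2(p−1)} / ‖u‖_p^{p−2}, where L_p u := (|u'|^{p−2}u')'. -/

import Mathlib

open MeasureTheory Real

/-- The L^r norm on the circle with the uniform probability measure dσ = dx/(2π),
for a 2π-periodic function `u : ℝ → ℝ`. -/
noncomputable def perNorm (r : ℝ) (u : ℝ → ℝ) : ℝ :=
  ((1 / (2 * π)) * ∫ x in (0:ℝ)..(2 * π), |u x| ^ r) ^ (1 / r)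

/-- `u` is 2π-periodic and C¹. -/
def PeriodicC1 (u : ℝ → ℝ) : Prop :=
  Function.Periodic u (2 * π) ∧ ContDiff ℝ 1 u

/-- λ₁ = inf ‖v'‖_p²/‖v‖_p² over 2π-periodic C¹ functions v ≢ 0 with ∫₀^{2π} v dx = 0. -/
noncomputable def lambdaOne (p : ℝ) : ℝ :=
  sInf { l : ℝ | ∃ v : ℝ → ℝ, PeriodicC1 v ∧ v ≠ 0 ∧
    (∫ x in (0:ℝ)..(2 * π), v x) = 0 ∧
    l = (perNorm p (deriv v)) ^ 2 / (perNorm p v) ^ 2 }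

/-- λ₁* = inf ‖v'‖_p²/‖v‖_2² over 2π-periodic C¹ functions v ≢ 0 with ∫₀^{2π} v dx = 0. -/
noncomputable def lambdaOneStar (p : ℝ) : ℝ :=
  sInf { l : ℝ | ∃ v : ℝ → ℝ, PeriodicC1 v ∧ v ≠ 0 ∧
    (∫ x in (0:ℝ)..(2 * π), v x) = 0 ∧
    l = (perNorm p (deriv v)) ^ 2 / (perNorm 2 v) ^ 2 }

/-- The p-Laplacian L_p u = (|u'|^{p-2} u')'. -/
noncomputable def pLap (p : ℝ) (u : ℝ → ℝ) : ℝ → ℝ :=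
  deriv (fun x => |deriv u x| ^ (p - 2) * deriv u x)

lemma phi_hasDerivAt {p : ℝ} (hp : 2 < p) (s : ℝ) :
    HasDerivAt (fun t : ℝ => |t| ^ (p - 2) * t) ((p - 1) * |s| ^ (p - 2)) s := by
  have key : ∀ s : ℝ, 0 < s → HasDerivAt (fun t : ℝ => |t| ^ (p - 2) * t)
      ((p - 1) * |s| ^ (p - 2)) s := by
    intro s hs
    have h1 : HasDerivAt (fun t : ℝ => t ^ (p - 1)) ((p - 1) * s ^ (p - 2)) s := by
      have := Real.hasDerivAt_rpow_const (x := s) (p := p - 1) (Or.inl hs.ne')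
      convert this using 2
      ring_nf
    have heq : (fun t : ℝ => |t| ^ (p - 2) * t) =ᶠ[nhds s] (fun t : ℝ => t ^ (p - 1)) := by
      filter_upwards [eventually_gt_nhds hs] with t ht
      rw [abs_of_pos ht, show p - 1 = (p - 2) + 1 by ring, Real.rpow_add ht, Real.rpow_one]
    rw [abs_of_pos hs]
    exact h1.congr_of_eventuallyEq heq
  rcases lt_trichotomy s 0 with hs | hs | hs
  · have h := key (-s) (by linarith)
    have h2 : HasDerivAt (fun t : ℝ => -(|(-t)| ^ (p - 2) * (-t))) ((p - 1) * |(-s)| ^ (p - 2)) s := by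
      have := (h.comp s (hasDerivAt_neg s)).neg
      refine this.congr_deriv ?_
      ring
    have : (fun t : ℝ => -(|(-t)| ^ (p - 2) * (-t))) = (fun t : ℝ => |t| ^ (p - 2) * t) := by
      funext t; rw [abs_neg]; ring
    rw [abs_neg] at h2
    rwa [this] at h2
  · subst hs
    have hd : (p : ℝ) - 1 ≠ 0 := by linarith
    rw [hasDerivAt_iff_tendsto_slope]
    have : (fun t : ℝ => |t| ^ (p - 2)) =ᶠ[nhdsWithin 0 {(0:ℝ)}ᶜ] slope (fun t : ℝ => |t| ^ (p - 2) * t) 0 := by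
      filter_upwards [self_mem_nhdsWithin] with t ht
      simp only [slope_def_field, Set.mem_compl_iff, Set.mem_singleton_iff] at *
      rw [eq_div_iff (sub_ne_zero.mpr ht)]
      simp
    have hcont : Filter.Tendsto (fun t : ℝ => |t| ^ (p - 2)) (nhdsWithin 0 {(0:ℝ)}ᶜ) (nhds ((p-1) * |(0:ℝ)| ^ (p-2))) := by
      have : Filter.Tendsto (fun t : ℝ => |t| ^ (p - 2)) (nhds 0) (nhds (|(0:ℝ)| ^ (p - 2))) := by
        apply ContinuousAt.tendsto
        exact (Real.continuousAt_rpow_const _ _ (Or.inr (by linarith))).comp continuous_abs.continuousAt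
      rw [abs_zero, Real.zero_rpow (by linarith)] at this ⊢
      rw [mul_zero]
      exact this.mono_left nhdsWithin_le_nhds
    exact hcont.congr' this
  · exact key s hs

/-- positivity of the integral of `|f|^p` when continuous `f` is nonzero somewhere inside. -/
lemma integral_abs_rpow_pos {f : ℝ → ℝ} (hf : Continuous f) {p : ℝ} (hp : 0 < p)
    {a b y : ℝ} (hy : y ∈ Set.Ioo a b) (hfy : f y ≠ 0) :
    0 < ∫ x in a..b, |f x| ^ p := by
  have hg : Continuous fun x => |f x| ^ p :=
    hf.abs.rpow_const (fun x => Or.inr hp.le)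
  have hgnn : ∀ x, 0 ≤ |f x| ^ p := fun x => Real.rpow_nonneg (abs_nonneg _) _
  obtain ⟨r0, hr0, hball⟩ : ∃ r0 > 0, Metric.ball y r0 ⊆ {x | f x ≠ 0} := by
    have hopen : IsOpen {x | f x ≠ 0} := isOpen_compl_singleton.preimage hf
    exact Metric.isOpen_iff.mp hopen y hfy
  have hm1 : min r0 (min (y - a) (b - y)) ≤ r0 := min_le_left _ _
  have hm2 : min r0 (min (y - a) (b - y)) ≤ y - a := (min_le_right _ _).trans (min_le_left _ _)
  have hm3 : min r0 (min (y - a) (b - y)) ≤ b - y := (min_le_right _ _).trans (min_le_right _ _)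
  have hmpos : 0 < min r0 (min (y - a) (b - y)) :=
    lt_min hr0 (lt_min (by linarith [hy.1]) (by linarith [hy.2]))
  set r := min r0 (min (y - a) (b - y)) / 2 with hrdef
  have hrpos : 0 < r := by positivity
  have hra : a ≤ y - r := by rw [hrdef]; linarith
  have hrb : y + r ≤ b := by rw [hrdef]; linarith
  have hmid : 0 < ∫ x in (y - r)..(y + r), |f x| ^ p := by
    apply intervalIntegral.intervalIntegral_pos_of_pos_on (hg.intervalIntegrable _ _) ?_ (by linarith)
    intro x hx
    refine Real.rpow_pos_of_pos (abs_pos.mpr (hball ?_)) _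
    rw [Metric.mem_ball, Real.dist_eq, abs_sub_lt_iff]
    have h1 := hx.1; have h2 := hx.2
    rw [hrdef] at h1 h2
    constructor <;> linarith
  have hsplit1 : (∫ x in a..b, |f x| ^ p)
      = (∫ x in a..(y - r), |f x| ^ p) + ∫ x in (y - r)..b, |f x| ^ p :=
    (intervalIntegral.integral_add_adjacent_intervals (hg.intervalIntegrable _ _)
      (hg.intervalIntegrable _ _)).symm
  have hsplit2 : (∫ x in (y - r)..b, |f x| ^ p)
      = (∫ x in (y - r)..(y + r), |f x| ^ p) + ∫ x in (y + r)..b, |f x| ^ p :=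
    (intervalIntegral.integral_add_adjacent_intervals (hg.intervalIntegrable _ _)
      (hg.intervalIntegrable _ _)).symm
  have hnn1 : 0 ≤ ∫ x in a..(y - r), |f x| ^ p :=
    intervalIntegral.integral_nonneg hra (fun x _ => hgnn x)
  have hnn2 : 0 ≤ ∫ x in (y + r)..b, |f x| ^ p :=
    intervalIntegral.integral_nonneg hrb (fun x _ => hgnn x)
  linarith


lemma mul_w_eq_abs_rpow {p : ℝ} (hp : 2 < p) (t : ℝ) :
    t * (|t| ^ (p - 2) * t) = |t| ^ p := by
  rcases eq_or_ne t 0 with rfl | ht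
  · simp [Real.zero_rpow (show p ≠ 0 by linarith)]
  · have habs : 0 < |t| := abs_pos.mpr ht
    calc t * (|t| ^ (p - 2) * t) = |t| ^ (p - 2) * (t * t) := by ring
      _ = |t| ^ (p - 2) * (|t| * |t|) := by rw [abs_mul_abs_self]
      _ = |t| ^ (p - 2) * (|t| ^ (1:ℝ) * |t| ^ (1:ℝ)) := by rw [Real.rpow_one]
      _ = |t| ^ ((p - 2) + ((1:ℝ) + 1)) := by
            rw [Real.rpow_add habs (p - 2), Real.rpow_add habs 1 1]
      _ = |t| ^ p := by norm_num

lemma cont_memLp {f : ℝ → ℝ} (hf : Continuous f) (q : ENNReal) :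
    MemLp f q (volume.restrict (Set.Ioc (0:ℝ) (2 * π))) := by
  have : IsFiniteMeasure (volume.restrict (Set.Ioc (0:ℝ) (2 * π))) := by
    constructor
    rw [Measure.restrict_apply_univ]
    exact measure_Ioc_lt_top
  obtain ⟨C, hC⟩ := (isCompact_Icc (a := (0:ℝ)) (b := 2 * π)).exists_bound_of_continuousOn
    hf.continuousOn
  refine MemLp.of_bound hf.aestronglyMeasurable.restrict C ?_
  filter_upwards [ae_restrict_mem measurableSet_Ioc] with x hx
  exact hC x (Set.Ioc_subset_Icc_self hx)

/-- the Poincaré-type estimate of Lemma 2.3. -/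
theorem poincare_type_estimate (p : ℝ) (hp : 2 < p) (u : ℝ → ℝ)
    (hper : Function.Periodic u (2 * π)) (hpos : ∀ x, 0 < u x)
    (hC2 : ContDiff ℝ 2 u) :
    (1 / (2 * π)) * (∫ x in (0:ℝ)..(2 * π), (u x) ^ (2 - p) * (pLap p u x) ^ 2) ≥
      lambdaOne p * (perNorm p (deriv u)) ^ (2 * (p - 1)) / (perNorm p u) ^ (p - 2) := by
  have hπ : 0 < π := pi_pos
  have hc2 : (0:ℝ) < 2 * π := by linarith
  have hp0 : (0:ℝ) < p := by linarith
  have hpne : p ≠ 0 := by linarith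
  have hp2ne : p - 2 ≠ 0 := by linarith
  have hud : Differentiable ℝ u := hC2.differentiable (by norm_num)
  have hcu : Continuous u := hC2.continuous
  have hu1 : ContDiff ℝ 1 (deriv u) :=
    (contDiff_succ_iff_deriv.mp (show ContDiff ℝ (1 + 1) u by exact_mod_cast hC2)).2.2
  have hu1d : Differentiable ℝ (deriv u) := hu1.differentiable one_ne_zero
  have hcu1 : Continuous (deriv u) := hu1d.continuous
  have hcu2 : Continuous (deriv (deriv u)) := hu1.continuous_deriv le_rfl
  -- w and its derivative
  set w : ℝ → ℝ := fun x => |deriv u x| ^ (p - 2) * deriv u x with hwdef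
  have hwd : ∀ x, HasDerivAt w ((p - 1) * |deriv u x| ^ (p - 2) * deriv (deriv u) x) x := by
    intro x
    have := (phi_hasDerivAt hp (deriv u x)).comp x (hu1d x).hasDerivAt
    exact this
  have hplf : ∀ x, pLap p u x = (p - 1) * |deriv u x| ^ (p - 2) * deriv (deriv u) x :=
    fun x => (hwd x).deriv
  have habs : Continuous (fun t : ℝ => |t| ^ (p - 2)) :=
    continuous_abs.rpow_const (fun t => Or.inr (by linarith))
  have hcpl : Continuous (pLap p u) := by
    have he : pLap p u = fun x => (p - 1) * |deriv u x| ^ (p - 2) * deriv (deriv u) x :=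
      funext hplf
    rw [he]
    exact (continuous_const.mul (habs.comp hcu1)).mul hcu2
  have hcw : Continuous w := (habs.comp hcu1).mul hcu1
  have hwd' : ∀ x, HasDerivAt w (pLap p u x) x := fun x => by rw [hplf x]; exact hwd x
  -- periodicity of deriv u and w
  have hperu1 : Function.Periodic (deriv u) (2 * π) := by
    intro x
    have h2 : (fun y => u (y + 2 * π)) = u := funext fun y => hper y
    have h1 : HasDerivAt (fun y => u (y + 2 * π)) (deriv u (x + 2 * π)) x := by
      exact ((hud (x + 2 * π)).hasDerivAt.comp x ((hasDerivAt_id x).add_const (2 * π))).congr_deriv (mul_one _)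
    rw [h2] at h1
    exact h1.deriv.symm
  have hperw : Function.Periodic w (2 * π) := fun x => by simp only [hwdef, hperu1 x]
  -- v = u - mean
  set c : ℝ := (∫ x in (0:ℝ)..(2 * π), u x) / (2 * π) with hcdef
  set v : ℝ → ℝ := fun x => u x - c with hvdef
  have hcv : Continuous v := hcu.sub continuous_const
  have hvd : ∀ x, HasDerivAt v (deriv u x) x := fun x => (hud x).hasDerivAt.sub_const c
  have hdv : deriv v = deriv u := funext fun x => (hvd x).deriv
  have hperv : Function.Periodic v (2 * π) := fun x => by simp only [hvdef, hper x]
  have hintv : (∫ x in (0:ℝ)..(2 * π), v x) = 0 := by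
    simp only [hvdef]
    rw [intervalIntegral.integral_sub (hcu.intervalIntegrable _ _) intervalIntegrable_const,
      intervalIntegral.integral_const, hcdef]
    rw [smul_eq_mul]
    field_simp
    ring
  rw [ge_iff_le]
  by_cases hconst : ∀ x, u x = c
  · -- constant case : both sides are 0 / nonneg
    have hu0 : deriv u = fun _ => (0:ℝ) := by
      have : u = fun _ => c := funext hconst
      rw [this]
      funext x
      exact deriv_const x c
    have hN0 : perNorm p (deriv u) = 0 := by
      unfold perNorm
      rw [hu0]
      simp only [abs_zero, Real.zero_rpow (show p ≠ 0 by linarith),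
        intervalIntegral.integral_zero, mul_zero]
      exact Real.zero_rpow (one_div_ne_zero (by linarith))
    rw [hN0, Real.zero_rpow (show 2 * (p - 1) ≠ 0 by nlinarith), mul_zero, zero_div]
    apply mul_nonneg (by positivity)
    apply intervalIntegral.integral_nonneg (by linarith)
    intro x _
    exact mul_nonneg (Real.rpow_nonneg (hpos x).le _) (sq_nonneg _)
  · -- main case
    push_neg at hconst
    obtain ⟨x₀, hx₀⟩ := hconst
    have hvx₀ : v x₀ ≠ 0 := sub_ne_zero.mpr hx₀
    have hvne : v ≠ 0 := fun h => hvx₀ (by rw [h]; rfl)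
    obtain ⟨y₀, hy₀, hvy₀⟩ : ∃ y ∈ Set.Ioo (0:ℝ) (2 * π), v y ≠ 0 := by
      obtain ⟨y, hy, hyeq⟩ := hperv.exists_mem_Ico₀ hc2 x₀
      rcases eq_or_lt_of_le hy.1 with h0 | h0
      · have hv0 : v 0 ≠ 0 := by
          rw [← h0] at hyeq
          exact fun h => hvx₀ (hyeq.trans h)
        have hev : ∀ᶠ z in nhds (0:ℝ), v z ≠ 0 := hcv.continuousAt.eventually_ne hv0
        obtain ⟨ε, hε, hball⟩ := Metric.eventually_nhds_iff.mp hev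
        refine ⟨min (ε / 2) π, ⟨by positivity, lt_of_le_of_lt (min_le_right _ _) (by linarith)⟩, ?_⟩
        apply hball
        rw [Real.dist_eq, sub_zero, abs_of_pos (by positivity)]
        exact lt_of_le_of_lt (min_le_left _ _) (by linarith)
      · refine ⟨y, ⟨h0, hy.2⟩, fun h => hvx₀ ?_⟩
        exact hyeq.trans h
    -- the four basic quantities
    set a := ∫ x in (0:ℝ)..(2 * π), (u x) ^ (2 - p) * (pLap p u x) ^ 2 with hadef
    set d := ∫ x in (0:ℝ)..(2 * π), |deriv u x| ^ p with hddef
    set s := ∫ x in (0:ℝ)..(2 * π), |u x| ^ p with hsdef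
    set t := ∫ x in (0:ℝ)..(2 * π), |v x| ^ p with htdef
    have hspos : 0 < s :=
      integral_abs_rpow_pos hcu hp0 (Set.mem_Ioo.mpr ⟨hπ, by linarith⟩) (hpos π).ne'
    have htpos : 0 < t := integral_abs_rpow_pos hcv hp0 hy₀ hvy₀
    have hdnn : 0 ≤ d :=
      intervalIntegral.integral_nonneg hc2.le fun x _ => Real.rpow_nonneg (abs_nonneg _) _
    have hann : 0 ≤ a := by
      apply intervalIntegral.integral_nonneg hc2.le
      intro x _
      exact mul_nonneg (Real.rpow_nonneg (hpos x).le _) (sq_nonneg _)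
    -- integration by parts
    have hibp : d = -∫ x in (0:ℝ)..(2 * π), v x * pLap p u x := by
      have h := intervalIntegral.integral_mul_deriv_eq_deriv_mul
        (a := (0:ℝ)) (b := 2 * π) (u := v) (v := w) (u' := fun x => deriv u x) (v' := pLap p u)
        (fun x _ => hvd x) (fun x _ => hwd' x)
        (hcu1.intervalIntegrable _ _) (hcpl.intervalIntegrable _ _)
      have hb1 : v (2 * π) = v 0 := by have := hperv 0; rwa [zero_add] at this
      have hb2 : w (2 * π) = w 0 := by have := hperw 0; rwa [zero_add] at this
      have hd : (∫ x in (0:ℝ)..(2 * π), deriv u x * w x) = d := by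
        rw [hddef]
        apply intervalIntegral.integral_congr
        intro x _
        exact mul_w_eq_abs_rpow hp (deriv u x)
      rw [hb1, hb2, hd] at h
      rw [h]
      ring
    -- step 1 : d ≤ ∫ |v| * |pLap|
    have hstep1 : d ≤ ∫ x in (0:ℝ)..(2 * π), |v x| * |pLap p u x| := by
      rw [hibp, ← intervalIntegral.integral_neg]
      apply intervalIntegral.integral_mono_on hc2.le
        ((hcv.mul hcpl).neg.intervalIntegrable _ _)
        ((hcv.abs.mul hcpl.abs).intervalIntegrable _ _)
      intro x _
      calc -(v x * pLap p u x) ≤ |(-(v x * pLap p u x))| := le_abs_self _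
        _ = |v x| * |pLap p u x| := by rw [abs_neg, abs_mul]
    -- Cauchy-Schwarz with weight
    set μ := volume.restrict (Set.Ioc (0:ℝ) (2 * π)) with hμdef
    have hconv : ∀ f : ℝ → ℝ, (∫ x in (0:ℝ)..(2 * π), f x) = ∫ x, f x ∂μ := fun f =>
      intervalIntegral.integral_of_le hc2.le
    set F : ℝ → ℝ := fun x => (u x) ^ ((2 - p) / 2) * |pLap p u x| with hFdef
    set G : ℝ → ℝ := fun x => (u x) ^ ((p - 2) / 2) * |v x| with hGdef
    have hFc : Continuous F := (hcu.rpow_const fun x => Or.inl (hpos x).ne').mul hcpl.abs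
    have hGc : Continuous G := (hcu.rpow_const fun x => Or.inl (hpos x).ne').mul hcv.abs
    have hFnn : ∀ x, 0 ≤ F x := fun x =>
      mul_nonneg (Real.rpow_nonneg (hpos x).le _) (abs_nonneg _)
    have hGnn : ∀ x, 0 ≤ G x := fun x =>
      mul_nonneg (Real.rpow_nonneg (hpos x).le _) (abs_nonneg _)
    have hFG : ∀ x, |v x| * |pLap p u x| = F x * G x := by
      intro x
      have h1 : (u x) ^ ((2 - p) / 2) * (u x) ^ ((p - 2) / 2) = 1 := by
        rw [← Real.rpow_add (hpos x), show (2 - p) / 2 + (p - 2) / 2 = (0:ℝ) by ring,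
          Real.rpow_zero]
      have h2 : F x * G x
          = ((u x) ^ ((2 - p) / 2) * (u x) ^ ((p - 2) / 2)) * (|pLap p u x| * |v x|) := by
        rw [hFdef, hGdef]; ring
      rw [h2, h1, one_mul]; ring
    have hcs : (∫ x, F x * G x ∂μ)
        ≤ (∫ x, F x ^ (2:ℝ) ∂μ) ^ (1 / (2:ℝ)) * (∫ x, G x ^ (2:ℝ) ∂μ) ^ (1 / (2:ℝ)) :=
      integral_mul_le_Lp_mul_Lq_of_nonneg (Real.holderConjugate_iff.mpr ⟨one_lt_two, by norm_num⟩)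
        (Filter.Eventually.of_forall hFnn) (Filter.Eventually.of_forall hGnn)
        (cont_memLp hFc _) (cont_memLp hGc _)
    have hF2 : ∀ x, F x ^ (2:ℝ) = (u x) ^ (2 - p) * (pLap p u x) ^ 2 := by
      intro x
      rw [hFdef]
      rw [Real.mul_rpow (Real.rpow_nonneg (hpos x).le _) (abs_nonneg _)]
      congr 1
      · rw [← Real.rpow_mul (hpos x).le]
        congr 1
        ring
      · rw [show ((2:ℝ)) = ((2:ℕ):ℝ) by norm_num, Real.rpow_natCast, sq_abs]
    have hG2 : ∀ x, G x ^ (2:ℝ) = (u x) ^ (p - 2) * (v x) ^ 2 := by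
      intro x
      rw [hGdef]
      rw [Real.mul_rpow (Real.rpow_nonneg (hpos x).le _) (abs_nonneg _)]
      congr 1
      · rw [← Real.rpow_mul (hpos x).le]
        congr 1
        ring
      · rw [show ((2:ℝ)) = ((2:ℕ):ℝ) by norm_num, Real.rpow_natCast, sq_abs]
    have hFa : (∫ x, F x ^ (2:ℝ) ∂μ) = a := by
      rw [hadef, hconv]
      exact integral_congr_ae (Filter.Eventually.of_forall hF2)
    -- Hölder
    have hconj : Real.HolderConjugate (p / (p - 2)) (p / 2) := by
      rw [Real.holderConjugate_iff]
      constructor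
      · exact (one_lt_div (by linarith)).mpr (by linarith)
      · rw [inv_div, inv_div]
        field_simp
        ring
    have hhold : (∫ x, (u x) ^ (p - 2) * (v x) ^ 2 ∂μ)
        ≤ s ^ ((p - 2) / p) * t ^ (2 / p) := by
      have h := integral_mul_le_Lp_mul_Lq_of_nonneg hconj
        (f := fun x => (u x) ^ (p - 2)) (g := fun x => (v x) ^ 2)
        (Filter.Eventually.of_forall fun x => Real.rpow_nonneg (hpos x).le _)
        (Filter.Eventually.of_forall fun x => sq_nonneg _)
        (cont_memLp (hcu.rpow_const fun x => Or.inl (hpos x).ne') _)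
        (cont_memLp (hcv.pow 2) _)
      have e5 : ∀ x : ℝ, ((u x) ^ (p - 2) : ℝ) ^ (p / (p - 2)) = |u x| ^ p := by
        intro x
        rw [← Real.rpow_mul (hpos x).le, abs_of_pos (hpos x)]
        congr 1
        field_simp
      have e6 : ∀ x : ℝ, (((v x) ^ 2 : ℝ)) ^ (p / 2) = |v x| ^ p := by
        intro x
        rw [← sq_abs, ← Real.rpow_natCast |v x| 2]
        rw [← Real.rpow_mul (abs_nonneg _)]
        congr 1
        push_cast
        ring
      have h1 : (∫ x, ((u x) ^ (p - 2) : ℝ) ^ (p / (p - 2)) ∂μ) = s := by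
        rw [hsdef, hconv]
        exact integral_congr_ae (Filter.Eventually.of_forall e5)
      have h2 : (∫ x, (((v x) ^ 2 : ℝ)) ^ (p / 2) ∂μ) = t := by
        rw [htdef, hconv]
        exact integral_congr_ae (Filter.Eventually.of_forall e6)
      rw [h1, h2, one_div_div, one_div_div] at h
      exact h
    have hGt : (∫ x, G x ^ (2:ℝ) ∂μ) ≤ s ^ ((p - 2) / p) * t ^ (2 / p) := by
      rw [integral_congr_ae (Filter.Eventually.of_forall hG2)]
      exact hhold
    have hG2nn : 0 ≤ ∫ x, G x ^ (2:ℝ) ∂μ := by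
      refine integral_nonneg fun x => ?_
      simp only [Pi.zero_apply]
      exact Real.rpow_nonneg (hGnn x) _
    -- combine : d ≤ a^{1/2} * B^{1/2}
    set B := s ^ ((p - 2) / p) * t ^ (2 / p) with hBdef
    have hBnn : 0 ≤ B := by positivity
    have hchain : d ≤ a ^ (1 / (2:ℝ)) * B ^ (1 / (2:ℝ)) := by
      have h0 : d ≤ ∫ x, F x * G x ∂μ := by
        rw [← hconv]
        exact hstep1.trans_eq (intervalIntegral.integral_congr fun x _ => hFG x)
      refine h0.trans (hcs.trans ?_)
      rw [hFa]
      apply mul_le_mul_of_nonneg_left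
        (Real.rpow_le_rpow hG2nn hGt (by norm_num)) (Real.rpow_nonneg hann _)
    have hkey : ∀ x : ℝ, 0 ≤ x → x ^ (1 / (2:ℝ)) * x ^ (1 / (2:ℝ)) = x := by
      intro x hx
      rw [← Real.rpow_add' hx (by norm_num)]
      norm_num
    have hdd : d * d ≤ a * B := by
      calc d * d ≤ (a ^ (1 / (2:ℝ)) * B ^ (1 / (2:ℝ))) * (a ^ (1 / (2:ℝ)) * B ^ (1 / (2:ℝ))) :=
            mul_le_mul hchain hchain hdnn (by positivity)
        _ = (a ^ (1 / (2:ℝ)) * a ^ (1 / (2:ℝ))) * (B ^ (1 / (2:ℝ)) * B ^ (1 / (2:ℝ))) := by ring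
        _ = a * B := by rw [hkey a hann, hkey B hBnn]
    -- normalized quantities
    set X := 1 / (2 * π) * d with hXdef
    set S := 1 / (2 * π) * s with hSdef
    set T := 1 / (2 * π) * t with hTdef
    have hX0 : 0 ≤ X := by positivity
    have hS0 : 0 < S := by positivity
    have hT0 : 0 < T := by positivity
    have hNu' : perNorm p (deriv u) = X ^ (1 / p) := by
      unfold perNorm
      rw [← hddef, ← hXdef]
    have hNu : perNorm p u = S ^ (1 / p) := by
      unfold perNorm
      rw [← hsdef, ← hSdef]
    have hNv : perNorm p v = T ^ (1 / p) := by
      unfold perNorm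
      rw [← htdef, ← hTdef]
    have hXX : X * X ≤ (1 / (2 * π) * a) * (S ^ ((p - 2) / p) * T ^ (2 / p)) := by
      have h1 : S ^ ((p - 2) / p) = (1 / (2 * π)) ^ ((p - 2) / p) * s ^ ((p - 2) / p) :=
        Real.mul_rpow (by positivity) hspos.le
      have h2 : T ^ (2 / p) = (1 / (2 * π)) ^ (2 / p) * t ^ (2 / p) :=
        Real.mul_rpow (by positivity) htpos.le
      have h3 : ((1:ℝ) / (2 * π)) ^ ((p - 2) / p) * (1 / (2 * π)) ^ (2 / p) = 1 / (2 * π) := by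
        rw [← Real.rpow_add (by positivity), show (p - 2) / p + 2 / p = 1 by field_simp; ring,
          Real.rpow_one]
      calc X * X = 1 / (2 * π) * (1 / (2 * π)) * (d * d) := by rw [hXdef]; ring
        _ ≤ 1 / (2 * π) * (1 / (2 * π)) * (a * B) := by
            apply mul_le_mul_of_nonneg_left hdd (by positivity)
        _ = (1 / (2 * π) * a) * (((1 / (2 * π)) ^ ((p - 2) / p) * (1 / (2 * π)) ^ (2 / p))
              * (s ^ ((p - 2) / p) * t ^ (2 / p))) := by rw [h3, hBdef]; ring
        _ = (1 / (2 * π) * a) * (S ^ ((p - 2) / p) * T ^ (2 / p)) := by rw [h1, h2]; ring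
    -- lambda_1 bound via the test function v
    have hmem : (perNorm p (deriv v)) ^ 2 / (perNorm p v) ^ 2 ∈
        { l : ℝ | ∃ v : ℝ → ℝ, PeriodicC1 v ∧ v ≠ 0 ∧
          (∫ x in (0:ℝ)..(2 * π), v x) = 0 ∧
          l = (perNorm p (deriv v)) ^ 2 / (perNorm p v) ^ 2 } :=
      ⟨v, ⟨hperv, (hC2.of_le (by norm_num)).sub contDiff_const⟩, hvne, hintv, rfl⟩
    have hbdd : BddBelow { l : ℝ | ∃ v : ℝ → ℝ, PeriodicC1 v ∧ v ≠ 0 ∧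
          (∫ x in (0:ℝ)..(2 * π), v x) = 0 ∧
          l = (perNorm p (deriv v)) ^ 2 / (perNorm p v) ^ 2 } := by
      refine ⟨0, fun l hl => ?_⟩
      obtain ⟨v', _, _, _, rfl⟩ := hl
      positivity
    have hlam : lambdaOne p ≤ (perNorm p (deriv v)) ^ 2 / (perNorm p v) ^ 2 :=
      csInf_le hbdd hmem
    have h3' : (perNorm p (deriv v)) ^ 2 = X ^ (2 / p) := by
      rw [hdv, hNu', ← Real.rpow_natCast (X ^ (1 / p)) 2, ← Real.rpow_mul hX0]
      congr 1
      push_cast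
      ring
    have h4' : (perNorm p v) ^ 2 = T ^ (2 / p) := by
      rw [hNv, ← Real.rpow_natCast (T ^ (1 / p)) 2, ← Real.rpow_mul hT0.le]
      congr 1
      push_cast
      ring
    rw [h3', h4'] at hlam
    have h5 : perNorm p (deriv u) ^ (2 * (p - 1) : ℝ) = X ^ (2 * (p - 1) / p) := by
      rw [hNu', ← Real.rpow_mul hX0]
      congr 1
      ring
    have h6 : perNorm p u ^ (p - 2 : ℝ) = S ^ ((p - 2) / p) := by
      rw [hNu, ← Real.rpow_mul hS0.le]
      congr 1
      ring
    rw [h5, h6]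
    -- final computation
    have hXp : 0 ≤ X ^ (2 * (p - 1) / p) := Real.rpow_nonneg hX0 _
    have hSp : 0 < S ^ ((p - 2) / p) := Real.rpow_pos_of_pos hS0 _
    have hTp : 0 < T ^ (2 / p) := Real.rpow_pos_of_pos hT0 _
    rw [div_le_iff₀ hSp]
    calc lambdaOne p * X ^ (2 * (p - 1) / p)
        ≤ (X ^ (2 / p) / T ^ (2 / p)) * X ^ (2 * (p - 1) / p) :=
          mul_le_mul_of_nonneg_right hlam hXp
      _ = (X ^ (2 / p) * X ^ (2 * (p - 1) / p)) / T ^ (2 / p) := by ring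
      _ = (X * X) / T ^ (2 / p) := by
          rw [← Real.rpow_add' hX0 (show 2 / p + 2 * (p - 1) / p ≠ 0 by
            rw [show 2 / p + 2 * (p - 1) / p = 2 by field_simp; ring]; norm_num)]
          rw [show 2 / p + 2 * (p - 1) / p = 2 by field_simp; ring]
          rw [show ((2:ℝ)) = ((2:ℕ):ℝ) by norm_num, Real.rpow_natCast, pow_two]
      _ ≤ ((1 / (2 * π) * a) * (S ^ ((p - 2) / p) * T ^ (2 / p))) / T ^ (2 / p) := by
          gcongr
      _ = 1 / (2 * π) * a * S ^ ((p - 2) / p) := by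
          field_simp
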